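/- Let P be the orthogonal projection onto an N-dimensional subspace W ⊆ ℝ^M and let x, y ∈ ℝ^M. Then ‖Px‖ = ‖Py‖ if and only if there exists an orthonormal basis {φ_1,...,φ_N} of W such that |⟨x,φ_n⟩| = |⟨y,φ_n⟩| for all n = 1,...,N. -/

import Mathlib

open RealInnerProductSpace

lemma key {E : Type*} [NormedAddCommGroup E] [InnerProductSpace ℝ E] [FiniteDimensional ℝ E]
    {N : ℕ} (hN : 1 ≤ N) (hE : Module.finrank ℝ E = N) {u v : E} (huv : ‖u‖ = ‖v‖) :
    ∃ b : OrthonormalBasis (Fin N) ℝ E, ∀ n, |⟪u, b n⟫| = |⟪v, b n⟫| := by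
  rcases eq_or_ne u v with rfl | hne
  · exact ⟨(stdOrthonormalBasis ℝ E).reindex (finCongr hE), fun _ => rfl⟩
  · obtain ⟨i0, -⟩ : ∃ _ : Fin N, True := ⟨⟨0, hN⟩, trivial⟩
    set w : E := ‖u - v‖⁻¹ • (u - v) with hw
    have hsub : u - v ≠ 0 := sub_ne_zero.mpr hne
    have hwn : ‖w‖ = 1 := by
      rw [hw, norm_smul, norm_inv, norm_norm, inv_mul_cancel₀ (norm_ne_zero_iff.mpr hsub)]
    have hon : Orthonormal ℝ (({i0} : Set (Fin N)).restrict (fun _ => w)) := by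
      rw [orthonormal_iff_ite]
      rintro ⟨i, hi⟩ ⟨j, hj⟩
      simp only [Set.mem_singleton_iff] at hi hj
      subst hi; subst hj
      simp [Set.restrict, real_inner_self_eq_norm_sq, hwn]
    obtain ⟨b, hb⟩ := Orthonormal.exists_orthonormalBasis_extension_of_card_eq
      (by simpa using hE) hon
    have hb0 : b i0 = w := hb i0 rfl
    refine ⟨b, fun n => ?_⟩
    have hz : ⟪u + v, u - v⟫ = 0 := (real_inner_add_sub_eq_zero_iff u v).mpr huv
    rcases eq_or_ne n i0 with rfl | hn
    · have h0 : ⟪u, b n⟫ = -⟪v, b n⟫ := by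
        rw [hb0, hw, real_inner_smul_right, real_inner_smul_right]
        rw [inner_add_left] at hz
        linear_combination ‖u - v‖⁻¹ * hz
      rw [h0, abs_neg]
    · have horth : ⟪w, b n⟫ = 0 := by
        have h2 : ⟪b i0, b n⟫ = 0 := b.orthonormal.2 (Ne.symm hn)
        rw [hb0] at h2
        exact h2
      have h1 : ⟪u - v, b n⟫ = 0 := by
        rw [hw, real_inner_smul_left] at horth
        rcases mul_eq_zero.mp horth with h | h
        · exact absurd (inv_eq_zero.mp h) (norm_ne_zero_iff.mpr hsub)
        · exact h
      rw [inner_sub_left] at h1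
      have : ⟪u, b n⟫ = ⟪v, b n⟫ := by linarith
      rw [this]

theorem stmt_4 (M N : ℕ) (hN : 1 ≤ N) (W : Submodule ℝ (EuclideanSpace ℝ (Fin M)))
    (hW : Module.finrank ℝ W = N) (x y : EuclideanSpace ℝ (Fin M)) :
    ‖W.orthogonalProjectionOnto x‖ = ‖W.orthogonalProjectionOnto y‖ ↔
    ∃ φ : Fin N → EuclideanSpace ℝ (Fin M), Orthonormal ℝ φ ∧
      Submodule.span ℝ (Set.range φ) = W ∧
      ∀ n, |⟪x, φ n⟫| = |⟪y, φ n⟫| := by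
  set u := W.orthogonalProjectionOnto x with hu
  set v := W.orthogonalProjectionOnto y with hv
  have hinner : ∀ (z : EuclideanSpace ℝ (Fin M)) (w : W),
      ⟪z, (w : EuclideanSpace ℝ (Fin M))⟫ = ⟪W.orthogonalProjectionOnto z, w⟫ := by
    intro z w
    have h := W.starProjection_inner_eq_zero z (w : EuclideanSpace ℝ (Fin M)) w.2
    rw [Submodule.starProjection_apply, inner_sub_left] at h
    rw [Submodule.coe_inner]
    linarith
  constructor
  · intro h
    obtain ⟨b, hb⟩ := key hN hW (u := u) (v := v) h
    refine ⟨fun n => (b n : EuclideanSpace ℝ (Fin M)), ?_, ?_, ?_⟩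
    · exact b.orthonormal.comp_linearIsometry W.subtypeₗᵢ
    · have h1 : Set.range (fun n => ((b n : W) : EuclideanSpace ℝ (Fin M))) =
          W.subtype '' (Set.range fun n => b n) := by
        rw [← Set.range_comp]; rfl
      have h2 : Submodule.span ℝ (Set.range fun n => b n) = ⊤ := by
        simpa using b.toBasis.span_eq
      rw [h1, ← Submodule.map_span, h2, Submodule.map_top, Submodule.range_subtype]
    · intro n
      rw [hinner x (b n), hinner y (b n)]
      exact hb n
  · rintro ⟨φ, hon, hspan, habs⟩
    have hmem : ∀ n, φ n ∈ W := fun n => hspan ▸ Submodule.subset_span ⟨n, rfl⟩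
    set ψ : Fin N → W := fun n => ⟨φ n, hmem n⟩ with hψ
    have honψ : Orthonormal ℝ ψ := by
      rw [orthonormal_iff_ite] at hon ⊢
      intro i j
      rw [Submodule.coe_inner]
      exact hon i j
    have hspanψ : ⊤ ≤ Submodule.span ℝ (Set.range ψ) := by
      intro w _
      have hw : (w : EuclideanSpace ℝ (Fin M)) ∈ Submodule.span ℝ (Set.range φ) :=
        hspan ▸ w.2
      have hr : Set.range φ = W.subtype '' (Set.range ψ) := by
        rw [← Set.range_comp]; rfl
      rw [hr, ← Submodule.map_span] at hw
      obtain ⟨w', hw', hww'⟩ := hw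
      have : w' = w := Subtype.ext hww'
      rwa [← this]
    set b := OrthonormalBasis.mk honψ hspanψ with hbdef
    have parseval : ∀ z : W, ‖z‖ ^ 2 = ∑ n, ⟪z, b n⟫ ^ 2 := by
      intro z
      have h := b.sum_inner_mul_inner z z
      rw [real_inner_self_eq_norm_sq] at h
      rw [← h]
      congr 1; ext n; rw [real_inner_comm (b n) z]; ring
    have hcoord : ∀ n, ⟪u, b n⟫ ^ 2 = ⟪v, b n⟫ ^ 2 := by
      intro n
      have hbn : b n = ψ n := by rw [hbdef, OrthonormalBasis.coe_mk]
      rw [← sq_abs, ← sq_abs ⟪v, b n⟫]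
      have h1 : ⟪u, b n⟫ = ⟪x, φ n⟫ := by rw [hbn, ← hinner x (ψ n)]
      have h2 : ⟪v, b n⟫ = ⟪y, φ n⟫ := by rw [hbn, ← hinner y (ψ n)]
      rw [h1, h2, habs n]
    have hsq : ‖u‖ ^ 2 = ‖v‖ ^ 2 := by
      rw [parseval u, parseval v]
      exact Finset.sum_congr rfl fun n _ => hcoord n
    exact (sq_eq_sq₀ (norm_nonneg _) (norm_nonneg _)).mp hsq
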